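/- Let B be a C*-algebra and S ⊆ B a closed linear subspace such that the set S ∩ B₊ of positive elements of B lying in S has dense linear span in S. Let A be the smallest closed linear subspace of B containing S that is closed under the ternary product (x, y, z) ↦ x y* z (the closed subTRO of B generated by S). Then A is a C*-subalgebra of B: A is closed under multiplication and under the adjoint operation; moreover, A equals the smallest closed *-subalgebra of B containing S. -/

import Mathlib

open scoped ContinuousMapZero

lemma key_absorb {B : Type*} [NonUnitalCStarAlgebra B] (A : Submodule ℂ B)
    (hAclosed : IsClosed (A : Set B))
    (hATRO : ∀ x ∈ A, ∀ y ∈ A, ∀ z ∈ A, x * star y * z ∈ A)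
    (p : B) (hpA : p ∈ A) (c : B) (hpc : p = star c * c) :
    ∀ x ∈ A, x * p ∈ A ∧ p * x ∈ A := by
  have hpsa : IsSelfAdjoint p := by rw [hpc]; exact IsSelfAdjoint.star_mul_self c
  have hsp : ∀ t ∈ quasispectrum ℝ p, 0 ≤ t := by
    subst hpc
    intro t ht
    rw [Unitization.quasispectrum_eq_spectrum_inr' ℝ ℂ, Unitization.inr_mul,
      Unitization.inr_star] at ht
    exact spectrum_star_mul_self_nonneg t ht
  set q := p * p with hq_def
  have hqsa : IsSelfAdjoint q := by rw [IsSelfAdjoint, hq_def, star_mul, hpsa.star_eq]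
  have hqA4 : ∀ x ∈ A, x * q ∈ A ∧ q * x ∈ A := by
    intro x hx
    constructor
    · have h1 : x * q = x * star p * p := by rw [hpsa.star_eq, mul_assoc]
      exact h1 ▸ hATRO x hx p hpA p hpA
    · have h2 : q * x = p * star p * x := by rw [hpsa.star_eq]
      exact h2 ▸ hATRO p hpA p hpA x hx
  -- every element of the star algebra generated by q multiplies A into A
  have hadj : ∀ b ∈ NonUnitalStarAlgebra.adjoin ℝ {q}, ∀ x ∈ A,
      x * b ∈ A ∧ b * x ∈ A ∧ x * star b ∈ A ∧ star b * x ∈ A := by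
    intro b hb
    induction hb using NonUnitalStarAlgebra.adjoin_induction with
    | mem y hy =>
      rcases Set.mem_singleton_iff.mp hy with rfl
      intro x hx
      obtain ⟨h1, h2⟩ := hqA4 x hx
      exact ⟨h1, h2, by rw [hqsa.star_eq]; exact h1, by rw [hqsa.star_eq]; exact h2⟩
    | add b c _ _ hb hc =>
      intro x hx
      obtain ⟨h1, h2, h3, h4⟩ := hb x hx
      obtain ⟨h5, h6, h7, h8⟩ := hc x hx
      exact ⟨by rw [mul_add]; exact add_mem h1 h5, by rw [add_mul]; exact add_mem h2 h6,
        by rw [star_add, mul_add]; exact add_mem h3 h7,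
        by rw [star_add, add_mul]; exact add_mem h4 h8⟩
    | zero => intro x hx; simp
    | mul b c _ _ hb hc =>
      intro x hx
      refine ⟨?_, ?_, ?_, ?_⟩
      · rw [← mul_assoc]; exact (hc _ ((hb x hx).1)).1
      · rw [mul_assoc]; exact (hb _ ((hc x hx).2.1)).2.1
      · rw [star_mul, ← mul_assoc]; exact (hb _ ((hc x hx).2.2.1)).2.2.1
      · rw [star_mul, mul_assoc]; exact (hc _ ((hb x hx).2.2.2)).2.2.2
    | smul r b _ hb =>
      intro x hx
      obtain ⟨h1, h2, h3, h4⟩ := hb x hx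
      exact ⟨by rw [mul_smul_comm]; exact Submodule.smul_of_tower_mem A r h1,
        by rw [smul_mul_assoc]; exact Submodule.smul_of_tower_mem A r h2,
        by rw [star_smul, star_trivial, mul_smul_comm]; exact Submodule.smul_of_tower_mem A r h3,
        by rw [star_smul, star_trivial, smul_mul_assoc]; exact Submodule.smul_of_tower_mem A r h4⟩
    | star b _ hb =>
      intro x hx
      obtain ⟨h1, h2, h3, h4⟩ := hb x hx
      exact ⟨h3, h4, by rwa [star_star], by rwa [star_star]⟩
  -- p lies in the closure of that star algebra
  have hpmem : p ∈ closure (NonUnitalStarAlgebra.adjoin ℝ {q} : Set B) := by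
    have hsqrt_cont : ContinuousOn Real.sqrt (quasispectrum ℝ q) :=
      Real.continuous_sqrt.continuousOn
    have hp_eq : p = cfcₙ Real.sqrt q := by
      have h1 : cfcₙ (fun t : ℝ => t * t) p = q := by
        rw [cfcₙ_mul _ _ p, cfcₙ_id' ℝ p]
      have h2 : cfcₙ (fun t : ℝ => Real.sqrt (t * t)) p
          = cfcₙ Real.sqrt (cfcₙ (fun t : ℝ => t * t) p) :=
        cfcₙ_comp' Real.sqrt (fun t : ℝ => t * t) p
          (Real.continuous_sqrt.continuousOn) (by simp)
          ((continuous_id.mul continuous_id).continuousOn) (by simp) hpsa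
      have h3 : cfcₙ (fun t : ℝ => Real.sqrt (t * t)) p = cfcₙ (id : ℝ → ℝ) p :=
        cfcₙ_congr (fun t ht => by simpa using Real.sqrt_mul_self (hsp t ht))
      rw [← h1, ← h2, h3, cfcₙ_id ℝ p]
    rw [hp_eq, cfcₙ_apply Real.sqrt q hsqrt_cont Real.sqrt_zero hqsa]
    have hf₀ : (⟨⟨_, hsqrt_cont.restrict⟩, Real.sqrt_zero⟩ : C(quasispectrum ℝ q, ℝ)₀) ∈
        closure (NonUnitalStarAlgebra.adjoin ℝ
          {(ContinuousMapZero.id (quasispectrum ℝ q) : C(quasispectrum ℝ q, ℝ)₀)} : Set C(quasispectrum ℝ q, ℝ)₀) := by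
      rw [(ContinuousMapZero.adjoin_id_dense (quasispectrum ℝ q)).closure_eq]
      trivial
    have himg := image_closure_subset_closure_image (cfcₙHom_continuous hqsa)
      (s := (NonUnitalStarAlgebra.adjoin ℝ
        {(ContinuousMapZero.id (quasispectrum ℝ q) : C(quasispectrum ℝ q, ℝ)₀)} : Set C(quasispectrum ℝ q, ℝ)₀))
    have hmapped : (cfcₙHom hqsa) '' (NonUnitalStarAlgebra.adjoin ℝ
        {(ContinuousMapZero.id (quasispectrum ℝ q) : C(quasispectrum ℝ q, ℝ)₀)} : Set C(quasispectrum ℝ q, ℝ)₀)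
        = (NonUnitalStarAlgebra.adjoin ℝ {q} : Set B) := by
      have := NonUnitalStarAlgHom.map_adjoin_singleton (R := ℝ) (cfcₙHom hqsa)
        (ContinuousMapZero.id (quasispectrum ℝ q))
      have hid : cfcₙHom hqsa (ContinuousMapZero.id (quasispectrum ℝ q)) = q := cfcₙHom_id (R := ℝ) hqsa
      rw [hid] at this
      calc (cfcₙHom hqsa) '' _ = ((NonUnitalStarAlgebra.adjoin ℝ
            {(ContinuousMapZero.id (quasispectrum ℝ q) : C(quasispectrum ℝ q, ℝ)₀)}).map (cfcₙHom hqsa) : Set B) := rfl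
        _ = _ := by rw [this]
    exact hmapped ▸ himg (Set.mem_image_of_mem _ hf₀)
  intro x hx
  have hK : IsClosed {b : B | x * b ∈ A ∧ b * x ∈ A ∧ x * star b ∈ A ∧ star b * x ∈ A} := by
    apply IsClosed.inter
    · exact hAclosed.preimage (by fun_prop)
    apply IsClosed.inter
    · exact hAclosed.preimage (by fun_prop)
    apply IsClosed.inter
    · exact hAclosed.preimage (by fun_prop)
    · exact hAclosed.preimage (by fun_prop)
  have := closure_minimal (fun b hb => hadj b hb x hx) hK hpmem
  exact ⟨this.1, this.2.1⟩


/-- Let `B` be a C*-algebra and `S` a closed subspace of `B` whose positive part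
`S ∩ B₊` has dense linear span in `S`.  If `A` is the smallest closed subTRO of `B`
containing `S` (i.e. the closed subTRO generated by `S`), then `A` is a C*-subalgebra of `B`:
it is closed under multiplication and adjoints, and it equals the smallest closed
*-subalgebra of `B` containing `S` (being itself a closed *-subalgebra containing `S`, and
contained in every other one). -/
theorem subTRO_generated_by_positively_spanned_subspace_is_cstarSubalgebra
    (B : Type*) [NonUnitalCStarAlgebra B] (S A : Submodule ℂ B)
    (hSclosed : IsClosed (S : Set B))
    (hSdense : S ≤ (Submodule.span ℂ
      ((S : Set B) ∩ {x : B | ∃ c : B, x = star c * c})).topologicalClosure)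
    (hAclosed : IsClosed (A : Set B))
    (hSA : S ≤ A)
    (hATRO : ∀ x ∈ A, ∀ y ∈ A, ∀ z ∈ A, x * star y * z ∈ A)
    (hAmin : ∀ C : Submodule ℂ B, IsClosed (C : Set B) → S ≤ C →
      (∀ x ∈ C, ∀ y ∈ C, ∀ z ∈ C, x * star y * z ∈ C) → A ≤ C) :
    (∀ x ∈ A, ∀ y ∈ A, x * y ∈ A) ∧
    (∀ x ∈ A, star x ∈ A) ∧
    (∀ C : Submodule ℂ B, IsClosed (C : Set B) → S ≤ C →
      (∀ x ∈ C, ∀ y ∈ C, x * y ∈ C) → (∀ x ∈ C, star x ∈ C) → A ≤ C) := by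
  set P : Set B := (S : Set B) ∩ {x : B | ∃ c : B, x = star c * c} with hP_def
  have hPsa : ∀ p ∈ P, star p = p := by
    rintro p ⟨-, c, rfl⟩
    simp [star_mul]
  -- A is star-closed
  have hstar : ∀ a ∈ A, star a ∈ A := by
    let C₁ : Submodule ℂ B :=
      { carrier := {b | star b ∈ A}
        add_mem' := fun {a b} ha hb => by
          simp only [Set.mem_setOf_eq, star_add] at *
          exact add_mem ha hb
        zero_mem' := by simp
        smul_mem' := fun c b hb => by
          simp only [Set.mem_setOf_eq, star_smul] at *
          exact Submodule.smul_mem A _ hb }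
    have hC₁mem : ∀ b : B, b ∈ C₁ ↔ star b ∈ A := fun b => Iff.rfl
    have hC₁closed : IsClosed (C₁ : Set B) := hAclosed.preimage continuous_star
    have hSC₁ : S ≤ C₁ := by
      refine le_trans hSdense (Submodule.topologicalClosure_minimal _ ?_ hC₁closed)
      rw [Submodule.span_le]
      intro p hp
      rw [SetLike.mem_coe, hC₁mem, hPsa p hp]
      exact hSA hp.1
    have hTRO₁ : ∀ x ∈ C₁, ∀ y ∈ C₁, ∀ z ∈ C₁, x * star y * z ∈ C₁ := by
      intro x hx y hy z hz
      rw [hC₁mem] at *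
      have : star (x * star y * z) = star z * star (star y) * star x := by
        simp [star_mul, mul_assoc]
      rw [this]
      exact hATRO _ hz _ hy _ hx
    intro a ha
    exact (hAmin C₁ hC₁closed hSC₁ hTRO₁) ha
  -- A is multiplication-closed
  have hmul : ∀ x ∈ A, ∀ y ∈ A, x * y ∈ A := by
    let C₂ : Submodule ℂ B :=
      { carrier := {b | b ∈ A ∧ ∀ x ∈ A, x * b ∈ A}
        add_mem' := fun {a b} ha hb =>
          ⟨add_mem ha.1 hb.1, fun x hx => by
            rw [mul_add]; exact add_mem (ha.2 x hx) (hb.2 x hx)⟩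
        zero_mem' := ⟨zero_mem A, fun x hx => by simp⟩
        smul_mem' := fun c b hb =>
          ⟨Submodule.smul_mem A c hb.1, fun x hx => by
            rw [mul_smul_comm]; exact Submodule.smul_mem A c (hb.2 x hx)⟩ }
    have hC₂mem : ∀ b : B, b ∈ C₂ ↔ b ∈ A ∧ ∀ x ∈ A, x * b ∈ A := fun b => Iff.rfl
    have hC₂closed : IsClosed (C₂ : Set B) := by
      have : (C₂ : Set B) = (A : Set B) ∩ ⋂ x ∈ (A : Set B), (x * ·) ⁻¹' (A : Set B) := by
        ext b
        simp only [Set.mem_inter_iff, Set.mem_iInter, Set.mem_preimage, SetLike.mem_coe]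
        exact Iff.rfl
      rw [this]
      exact hAclosed.inter <| isClosed_biInter fun x _ =>
        hAclosed.preimage (continuous_const.mul continuous_id)
    have hSC₂ : S ≤ C₂ := by
      refine le_trans hSdense (Submodule.topologicalClosure_minimal _ ?_ hC₂closed)
      rw [Submodule.span_le]
      rintro p hp
      obtain ⟨hpS, c, hpc⟩ := hp
      rw [SetLike.mem_coe, hC₂mem]
      exact ⟨hSA hpS, fun x hx =>
        (key_absorb A hAclosed hATRO p (hSA hpS) c hpc x hx).1⟩
    have hTRO₂ : ∀ x ∈ C₂, ∀ y ∈ C₂, ∀ z ∈ C₂, x * star y * z ∈ C₂ := by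
      intro x hx y hy z hz
      rw [hC₂mem] at *
      refine ⟨hATRO x hx.1 y hy.1 z hz.1, fun w hw => ?_⟩
      have : w * (x * star y * z) = (w * x) * star y * z := by
        rw [← mul_assoc, ← mul_assoc]
      rw [this]
      exact hATRO _ (hx.2 w hw) y hy.1 z hz.1
    intro x hx y hy
    exact ((hAmin C₂ hC₂closed hSC₂ hTRO₂) hy).2 x hx
  refine ⟨hmul, hstar, ?_⟩
  intro C hCclosed hSC hCmul hCstar
  refine hAmin C hCclosed hSC ?_
  intro x hx y hy z hz
  exact hCmul _ (hCmul x hx _ (hCstar y hy)) z hz
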